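/- arXiv:1511.04260 — 3 statements merged into one kernel-verified Lean document; each statement's English description precedes it below -/
import Mathlib

section
/- Let X_0 : 𝔥 → 𝔥_* be a densely defined closed operator between separable Hilbert spaces with A_0 = X_0* X_0, and suppose 0 is an isolated point of the spectrum of A_0 with distance d^0 ≥ 36δ to the rest of the spectrum, where δ > 0. Let 𝔑 = Ker X_0 and let X_p : 𝔥 → 𝔥_* be bounded. For ω ∈ 𝔑, let ψ(ω) ∈ Dom X_0 ∩ 𝔑^⊥ be the unique weak solution of (X_0 ψ, X_0 ζ) = (−X_p ω, X_0 ζ) for all ζ ∈ Dom X_0 ∩ 𝔑^⊥. Define Z : 𝔥 → 𝔥 by Zω = ψ(ω) on 𝔑 and Z = 0 on 𝔑^⊥. Then ‖Z‖ ≤ (1/6) δ^{-1/2} ‖X_p‖. -/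
/-- Bound `‖Z‖ ≤ (1/6) δ^{-1/2} ‖X_p‖` for the abstract operator `Z` built from the
weak solutions `ψ(ω)` of `X₀*(X₀ψ − u) = 0` with `u = −X_p ω`.  The hypothesis that `0`
is an isolated point of the spectrum of `A₀ = X₀*X₀` at distance `d⁰ ≥ 36δ` from the
rest of the spectrum is expressed by the quadratic-form inequality
`36 δ ‖u‖² ≤ ‖X₀ u‖²` on `(Ker X₀)ᗮ ∩ Dom X₀`. -/
theorem stmt_3 {H H' : Type*}
    [NormedAddCommGroup H] [InnerProductSpace ℂ H] [CompleteSpace H]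
    [NormedAddCommGroup H'] [InnerProductSpace ℂ H'] [CompleteSpace H']
    (D : Submodule ℂ H) (hD : Dense (D : Set H))
    (X0 : D →ₗ[ℂ] H')
    (hX0closed : IsClosed {q : H × H' | ∃ u : D, (u : H) = q.1 ∧ X0 u = q.2})
    (N : Submodule ℂ H) (hN : ∀ u : D, (u : H) ∈ N ↔ X0 u = 0)
    (hNclosed : IsClosed (N : Set H))
    (δ : ℝ) (hδ : 0 < δ)
    (hgap : ∀ u : D, (u : H) ∈ Nᗮ → 36 * δ * ‖(u : H)‖ ^ 2 ≤ ‖X0 u‖ ^ 2)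
    (Xp : H →L[ℂ] H')
    (ψ : H → D)
    (hψmem : ∀ ω ∈ N, ((ψ ω : D) : H) ∈ Nᗮ)
    (hψeq : ∀ ω ∈ N, ∀ ζ : D, (ζ : H) ∈ Nᗮ →
      (inner ℂ (X0 (ψ ω)) (X0 ζ) : ℂ) = inner ℂ (-(Xp ω)) (X0 ζ))
    (Z : H →L[ℂ] H)
    (hZ1 : ∀ ω ∈ N, Z ω = ((ψ ω : D) : H))
    (hZ2 : ∀ v ∈ Nᗮ, Z v = 0) :
    ‖Z‖ ≤ (1 / 6) * δ ^ (-(1 / 2 : ℝ)) * ‖Xp‖ := by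
  have hC : (0:ℝ) ≤ (1 / 6) * δ ^ (-(1 / 2 : ℝ)) * ‖Xp‖ := by positivity
  refine Z.opNorm_le_bound hC (fun v => ?_)
  haveI : CompleteSpace N := hNclosed.completeSpace_coe
  set ω : H := (N.orthogonalProjectionOnto v : H) with hωdef
  have hωN : ω ∈ N := (N.orthogonalProjectionOnto v).2
  have hwN : v - ω ∈ Nᗮ := N.sub_starProjection_mem_orthogonal v
  -- ‖ω‖ ≤ ‖v‖
  have hperp : (inner ℂ ω (v - ω) : ℂ) = 0 :=
    (Submodule.mem_orthogonal N (v - ω)).1 hwN ω hωN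
  have hnorm : ‖ω‖ ≤ ‖v‖ := by
    have hv : v = ω + (v - ω) := by abel
    have := norm_add_sq (𝕜 := ℂ) ω (v - ω)
    rw [hperp] at this
    simp only [RCLike.zero_re, mul_zero, add_zero] at this
    rw [← hv] at this
    nlinarith [norm_nonneg ω, norm_nonneg (v - ω), sq_nonneg ‖v - ω‖, norm_nonneg v]
  -- Z v = ψ ω
  have hZv : Z v = ((ψ ω : D) : H) := by
    have h1 : Z (v - ω) = 0 := hZ2 _ hwN
    have h2 : Z v = Z ω + Z (v - ω) := by rw [← map_add]; congr 1; abel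
    rw [h2, h1, hZ1 ω hωN, add_zero]
  -- key bound ‖X0 (ψ ω)‖ ≤ ‖Xp‖ * ‖ω‖
  have heq := hψeq ω hωN (ψ ω) (hψmem ω hωN)
  have hsq : (‖X0 (ψ ω)‖ : ℝ) ^ 2 = ‖(inner ℂ (X0 (ψ ω)) (X0 (ψ ω)) : ℂ)‖ := by
    rw [inner_self_eq_norm_sq_to_K]; simp [sq_abs]
  have hkey : ‖X0 (ψ ω)‖ ≤ ‖Xp‖ * ‖ω‖ := by
    have hb : ‖(inner ℂ (-(Xp ω)) (X0 (ψ ω)) : ℂ)‖ ≤ ‖Xp ω‖ * ‖X0 (ψ ω)‖ := by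
      calc ‖(inner ℂ (-(Xp ω)) (X0 (ψ ω)) : ℂ)‖ ≤ ‖-(Xp ω)‖ * ‖X0 (ψ ω)‖ :=
            norm_inner_le_norm _ _
        _ = ‖Xp ω‖ * ‖X0 (ψ ω)‖ := by rw [norm_neg]
    have h1 : (‖X0 (ψ ω)‖ : ℝ) ^ 2 ≤ ‖Xp ω‖ * ‖X0 (ψ ω)‖ := by
      rw [hsq, heq]; exact hb
    have h2 : ‖Xp ω‖ ≤ ‖Xp‖ * ‖ω‖ := Xp.le_opNorm ω
    rcases eq_or_lt_of_le (norm_nonneg (X0 (ψ ω))) with h0 | h0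
    · rw [← h0]; positivity
    · nlinarith
  -- gap bound
  have hgapψ := hgap (ψ ω) (hψmem ω hωN)
  set s := Real.sqrt δ with hs
  have hspos : 0 < s := Real.sqrt_pos.2 hδ
  have hss : s ^ 2 = δ := Real.sq_sqrt hδ.le
  have hbound : 6 * s * ‖((ψ ω : D) : H)‖ ≤ ‖Xp‖ * ‖ω‖ := by
    have h1 : (6 * s * ‖((ψ ω : D) : H)‖) ^ 2 ≤ (‖Xp‖ * ‖ω‖) ^ 2 := by
      have : (6 * s * ‖((ψ ω : D) : H)‖) ^ 2 = 36 * δ * ‖((ψ ω : D) : H)‖ ^ 2 := by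
        rw [← hss]; ring
      nlinarith [hgapψ, hkey, norm_nonneg (X0 (ψ ω)), mul_nonneg (norm_nonneg Xp) (norm_nonneg ω)]
    have hnn : 0 ≤ ‖Xp‖ * ‖ω‖ := mul_nonneg (norm_nonneg Xp) (norm_nonneg ω)
    nlinarith [mul_nonneg (mul_nonneg (by norm_num : (0:ℝ) ≤ 6) hspos.le) (norm_nonneg ((ψ ω : D) : H))]
  -- conclude
  have hrpow : δ ^ (-(1 / 2 : ℝ)) = s⁻¹ := by
    rw [Real.rpow_neg hδ.le, hs, Real.sqrt_eq_rpow]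
  rw [hZv, hrpow]
  have hfin : ‖((ψ ω : D) : H)‖ ≤ ‖Xp‖ * ‖v‖ / (6 * s) := by
    rw [le_div_iff₀ (by positivity)]
    nlinarith [mul_nonneg (norm_nonneg Xp) (norm_nonneg ω), norm_nonneg Xp]
  calc ‖((ψ ω : D) : H)‖ ≤ ‖Xp‖ * ‖v‖ / (6 * s) := hfin
    _ = 1 / 6 * s⁻¹ * ‖Xp‖ * ‖v‖ := by field_simp
end

section
/- Let g^0 be the effective matrix defined by g^0 = |Ω|^{-1} ∫_Ω (b(D)Λ(x) + 1_m)* g(x) (b(D)Λ(x) + 1_m) dx, where Λ is the periodic solution of the cell problem b(D)* g (b(D)Λ + 1_m) = 0 with ∫_Ω Λ dx = 0. Then ġ ≤ g^0 ≤ ḡ, where ḡ and ġ are the arithmetic and harmonic means of g over the cell Ω. -/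
open MeasureTheory Matrix

namespace VR

lemma integrable_star {X : Type*} [MeasurableSpace X] {μ : MeasureTheory.Measure X}
    {f : X → ℂ} (h : MeasureTheory.Integrable f μ) :
    MeasureTheory.Integrable (fun x => star (f x)) μ :=
  h.norm.mono' (continuous_star.comp_aestronglyMeasurable h.1)
    (Filter.Eventually.of_forall fun x => by simp)
variable {m : ℕ}

lemma expand (M : Matrix (Fin m) (Fin m) ℂ) (a b : Fin m → ℂ) :
    star a ⬝ᵥ M.mulVec b = ∑ i, ∑ j, star (a i) * (M i j * b j) := by
  simp [dotProduct, mulVec, Finset.mul_sum]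

lemma swap {M : Matrix (Fin m) (Fin m) ℂ} (hM : M.IsHermitian) (a b : Fin m → ℂ) :
    star b ⬝ᵥ M.mulVec a = star (star a ⬝ᵥ M.mulVec b) := by
  rw [star_dotProduct]
  congr 1
  rw [star_mulVec, hM.eq, ← dotProduct_mulVec]

lemma dp_star (a b : Fin m → ℂ) : star a ⬝ᵥ b = star (star b ⬝ᵥ a) := by
  rw [star_dotProduct]

lemma sub_form (M : Matrix (Fin m) (Fin m) ℂ) (p q : Fin m → ℂ) :
    star (p - q) ⬝ᵥ M.mulVec (p - q) =
      star p ⬝ᵥ M.mulVec p - star q ⬝ᵥ M.mulVec p - star p ⬝ᵥ M.mulVec q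
        + star q ⬝ᵥ M.mulVec q := by
  simp only [star_sub, sub_dotProduct, mulVec_sub, dotProduct_sub]
  ring

lemma isUnit_det {M : Matrix (Fin m) (Fin m) ℂ} {c : ℝ} (hc : 0 < c)
    (h : ∀ v : Fin m → ℂ, c * ∑ i, ‖v i‖ ^ 2 ≤ (star v ⬝ᵥ M.mulVec v).re) :
    IsUnit M.det := by
  rw [← Matrix.isUnit_iff_isUnit_det]
  rw [← Matrix.mulVec_injective_iff_isUnit]
  intro a b hab
  have h0 : M.mulVec (a - b) = 0 := by rw [mulVec_sub, hab, sub_self]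
  have := h (a - b)
  rw [h0, dotProduct_zero] at this
  have hsum : ∑ i, ‖(a - b) i‖ ^ 2 ≤ 0 := by
    have := this
    simp only [Complex.zero_re] at this
    nlinarith [this]
  have hsum' : ∑ i, ‖(a - b) i‖ ^ 2 = 0 :=
    le_antisymm hsum (Finset.sum_nonneg fun i _ => by positivity)
  rw [Finset.sum_eq_zero_iff_of_nonneg (fun i _ => by positivity)] at hsum'
  ext i
  have := hsum' i (Finset.mem_univ i)
  have : ‖(a - b) i‖ = 0 := by nlinarith [norm_nonneg ((a-b) i)]
  have : (a - b) i = 0 := norm_eq_zero.mp this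
  simpa [sub_eq_zero, Pi.sub_apply] using this

lemma inv_form {M : Matrix (Fin m) (Fin m) ℂ} (hM : M.IsHermitian) (hd : IsUnit M.det)
    (η b : Fin m → ℂ) : star (M⁻¹.mulVec η) ⬝ᵥ M.mulVec b = star η ⬝ᵥ b := by
  rw [star_mulVec, hM.inv.eq, ← dotProduct_mulVec, mulVec_mulVec, Matrix.nonsing_inv_mul M hd,
    one_mulVec]

variable {m : ℕ}

lemma single_form (M : Matrix (Fin m) (Fin m) ℂ) (i j : Fin m) (z y : ℂ) :
    star (Pi.single i z) ⬝ᵥ M.mulVec (Pi.single j y) = star z * (M i j * y) := by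
  rw [mulVec_single, ← Pi.single_star, single_dotProduct]
  rfl

lemma pair_form (M : Matrix (Fin m) (Fin m) ℂ) (i j : Fin m) (z y : ℂ) :
    star (Pi.single i z + Pi.single j y) ⬝ᵥ M.mulVec (Pi.single i z + Pi.single j y) =
      star z * (M i i * z) + star z * (M i j * y) + star y * (M j i * z)
        + star y * (M j j * y) := by
  simp only [star_add, add_dotProduct, mulVec_add, dotProduct_add, single_form]
  ring

lemma sum_sq_single_add {i j : Fin m} (hij : i ≠ j) (z y : ℂ) :
    ∑ k, ‖((Pi.single i z + Pi.single j y) : Fin m → ℂ) k‖ ^ 2 = ‖z‖ ^ 2 + ‖y‖ ^ 2 := by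
  have h : ∀ k, ‖((Pi.single i z + Pi.single j y) : Fin m → ℂ) k‖ ^ 2 =
      (if k = i then ‖z‖ ^ 2 else 0) + (if k = j then ‖y‖ ^ 2 else 0) := by
    intro k
    by_cases hki : k = i
    · subst hki
      simp [Pi.single_apply, hij, Ne.symm hij]
    · by_cases hkj : k = j
      · subst hkj
        simp [Pi.single_apply, hki, Ne.symm hij, hij]
      · simp [Pi.single_apply, hki, hkj]
  simp only [h, Finset.sum_add_distrib, Finset.sum_ite_eq', Finset.mem_univ, if_true]

lemma sum_sq_single (i : Fin m) (z : ℂ) :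
    ∑ k, ‖(Pi.single i z : Fin m → ℂ) k‖ ^ 2 = ‖z‖ ^ 2 := by
  have h : ∀ k, ‖(Pi.single i z : Fin m → ℂ) k‖ ^ 2 = (if k = i then ‖z‖ ^ 2 else 0) := by
    intro k
    by_cases hki : k = i <;> simp [Pi.single_apply, hki]
  simp only [h, Finset.sum_ite_eq', Finset.mem_univ, if_true]

lemma entry_bound {M : Matrix (Fin m) (Fin m) ℂ} (hM : M.IsHermitian) {Cb : ℝ}
    (h0 : ∀ v : Fin m → ℂ, 0 ≤ (star v ⬝ᵥ M.mulVec v).re)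
    (hB : ∀ v : Fin m → ℂ, (star v ⬝ᵥ M.mulVec v).re ≤ Cb * ∑ k, ‖v k‖ ^ 2)
    (i j : Fin m) : ‖M i j‖ ≤ Cb := by
  have hdiag : ∀ k : Fin m, 0 ≤ (M k k).re ∧ (M k k).re ≤ Cb := by
    intro k
    have h1 := h0 (Pi.single k 1)
    have h2 := hB (Pi.single k 1)
    rw [single_form] at h1 h2
    rw [sum_sq_single] at h2
    simp at h1 h2
    exact ⟨h1, h2⟩
  have hCb : 0 ≤ Cb := le_trans (hdiag i).1 (hdiag i).2
  by_cases hij : i = j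
  · subst hij
    have him : (M i i).im = 0 := by
      have h2 := congrArg Complex.im (hM.apply i i)
      simp [Complex.conj_im] at h2
      linarith [h2]
    have hnn : ‖M i i‖ = |(M i i).re| := by
      rw [Complex.norm_def, Complex.normSq_apply, him]
      rw [show (M i i).re * (M i i).re + 0 * 0 = (M i i).re ^ 2 by ring, Real.sqrt_sq_eq_abs]
    rw [hnn, abs_of_nonneg (hdiag i).1]
    exact (hdiag i).2
  · by_cases hz : M i j = 0
    · simp [hz, hCb]
    · have hr : (‖M i j‖ : ℝ) ≠ 0 := norm_ne_zero_iff.mpr hz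
      set u : ℂ := star (M i j) / (‖M i j‖ : ℂ) with hu
      have hnorm : ‖u‖ = 1 := by
        rw [hu, norm_div, norm_star, Complex.norm_real, norm_norm, div_self hr]
      have e1 : M i j * u = (‖M i j‖ : ℂ) := by
        rw [hu, mul_div_assoc']
        rw [div_eq_iff (by exact_mod_cast hr)]
        rw [RCLike.star_def, Complex.mul_conj]
        rw [Complex.normSq_eq_norm_sq]
        push_cast
        ring
      have e2 : star u * M j i = (‖M i j‖ : ℂ) := by
        have hMji : M j i = star (M i j) := (hM.apply j i).symm
        rw [hu, star_div₀, star_star, RCLike.star_def, Complex.conj_ofReal, hMji,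
          div_mul_eq_mul_div, div_eq_iff (by exact_mod_cast hr)]
        rw [RCLike.star_def, Complex.mul_conj]
        rw [Complex.normSq_eq_norm_sq]
        push_cast
        ring
      have h4 : star u * u = 1 := by
        rw [RCLike.star_def, ← Complex.normSq_eq_conj_mul_self]
        rw [← Complex.sq_norm, hnorm]
        norm_num
      have e3 : star u * (M j j * u) = M j j := by
        calc star u * (M j j * u) = M j j * (star u * u) := by ring
          _ = M j j := by rw [h4, mul_one]
      have key := hB (Pi.single i 1 + Pi.single j u)
      rw [pair_form, sum_sq_single_add hij] at key
      rw [star_one, one_mul, mul_one, mul_one, e1, e2, e3] at key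
      simp only [Complex.add_re, Complex.ofReal_re] at key
      rw [hnorm] at key
      norm_num at key
      linarith [(hdiag i).1, (hdiag j).1, key]

end VR

open VR in
/-- Voigt–Reuss bracketing `ġ ≤ g⁰ ≤ ḡ` for the effective matrix (Proposition 5.3),
stated as an inequality of quadratic forms.  The concrete space `{b(D)v : v ∈ H̃^p(Ω)}`
is abstracted as a subspace `B` of functions with zero mean, `w C` is the solution of the
cell problem (`g(w C + C)` is orthogonal to `B`), and the effective quadratic form is
`⟨g⁰C, C⟩ = |Ω|⁻¹ ∫ ⟨g(x)(w_C(x)+C), w_C(x)+C⟩ dx`. -/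
theorem stmt_9 {X : Type*} [MeasurableSpace X] (μ : Measure X) [IsFiniteMeasure μ]
    (hμ : 0 < (μ Set.univ).toReal) {m : ℕ}
    (g : X → Matrix (Fin m) (Fin m) ℂ)
    (hherm : ∀ x, (g x).IsHermitian)
    (c Cb : ℝ) (hc : 0 < c)
    (hpos : ∀ x (v : Fin m → ℂ), c * ∑ i, ‖v i‖ ^ 2 ≤ (star v ⬝ᵥ (g x).mulVec v).re)
    (hbdd : ∀ x (v : Fin m → ℂ), (star v ⬝ᵥ (g x).mulVec v).re ≤ Cb * ∑ i, ‖v i‖ ^ 2)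
    (hintg : ∀ i j, Integrable (fun x => g x i j) μ)
    (hintginv : ∀ i j, Integrable (fun x => (g x)⁻¹ i j) μ)
    (B : Submodule ℂ (X → Fin m → ℂ))
    (hBint : ∀ u ∈ B, ∀ i, Integrable (fun x => u x i) μ)
    (hBL2 : ∀ u ∈ B, Integrable (fun x => ∑ i, ‖u x i‖ ^ 2) μ)
    (hBmean : ∀ u ∈ B, ∀ i, (∫ x, u x i ∂μ) = 0)
    (w : (Fin m → ℂ) → X → Fin m → ℂ) (hwB : ∀ C, w C ∈ B)
    (hcell : ∀ (C : Fin m → ℂ), ∀ u ∈ B,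
      (∫ x, star (u x) ⬝ᵥ (g x).mulVec (fun k => w C x k + C k) ∂μ) = 0)
    (hintQ : ∀ C : Fin m → ℂ,
      Integrable (fun x => star (fun k => w C x k + C k) ⬝ᵥ
        (g x).mulVec (fun k => w C x k + C k)) μ)
    (C : Fin m → ℂ) :
    (star C ⬝ᵥ
        ((Matrix.of fun i j => (((μ Set.univ).toReal : ℂ))⁻¹ * ∫ x, (g x)⁻¹ i j ∂μ)⁻¹).mulVec
          C).re ≤
      (μ Set.univ).toReal⁻¹ *
        (∫ x, star (fun k => w C x k + C k) ⬝ᵥ (g x).mulVec (fun k => w C x k + C k) ∂μ).re ∧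
    (μ Set.univ).toReal⁻¹ *
        (∫ x, star (fun k => w C x k + C k) ⬝ᵥ (g x).mulVec (fun k => w C x k + C k) ∂μ).re ≤
      (star C ⬝ᵥ
        (Matrix.of fun i j => (((μ Set.univ).toReal : ℂ))⁻¹ * ∫ x, g x i j ∂μ).mulVec C).re := by
  classical
  set T : ℝ := (μ Set.univ).toReal with hT
  have hμT : 0 < T := hμ
  have hT0 : ((T : ℂ)) ≠ 0 := by exact_mod_cast ne_of_gt hμT
  set vv : X → Fin m → ℂ := fun x k => w C x k + C k with hvv
  set Q : X → ℂ := fun x => star (vv x) ⬝ᵥ (g x).mulVec (vv x) with hQ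
  set A : ℂ := ∫ x, Q x ∂μ with hA
  -- basic integrability facts
  have hwint : ∀ i, Integrable (fun x => w C x i) μ := hBint _ (hwB C)
  have hwL2 : Integrable (fun x => ∑ i, ‖w C x i‖ ^ 2) μ := hBL2 _ (hwB C)
  have hvint : ∀ i, Integrable (fun x => vv x i) μ := fun i =>
    (hwint i).add (integrable_const (C i))
  have hvL2 : Integrable (fun x => ∑ i, ‖vv x i‖ ^ 2) μ := by
    apply Integrable.mono' ((hwL2.const_mul 2).add (integrable_const (2 * ∑ i, ‖C i‖ ^ 2)))
    · have h1 : (fun x => ∑ i, ‖vv x i‖ ^ 2) = fun x => ∑ i, ‖vv x i‖ * ‖vv x i‖ := by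
        funext x; exact Finset.sum_congr rfl fun i _ => sq (‖vv x i‖) ▸ (sq (‖vv x i‖)).symm ▸ by ring
      rw [h1]
      exact Finset.aestronglyMeasurable_fun_sum _ fun i _ =>
        ((hvint i).1.norm.mul (hvint i).1.norm)
    · filter_upwards with x
      have hb : ∑ i, ‖vv x i‖ ^ 2 ≤ 2 * ∑ i, ‖w C x i‖ ^ 2 + 2 * ∑ i, ‖C i‖ ^ 2 := by
        rw [Finset.mul_sum, Finset.mul_sum, ← Finset.sum_add_distrib]
        apply Finset.sum_le_sum
        intro i _
        have := norm_add_le (w C x i) (C i)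
        have h2 : ‖vv x i‖ ≤ ‖w C x i‖ + ‖C i‖ := this
        nlinarith [norm_nonneg (vv x i), norm_nonneg (w C x i), norm_nonneg (C i),
          sq_nonneg (‖w C x i‖ - ‖C i‖), sq_nonneg (‖w C x i‖ + ‖C i‖)]
      have hnn : 0 ≤ ∑ i, ‖vv x i‖ ^ 2 := Finset.sum_nonneg fun i _ => by positivity
      rw [Real.norm_of_nonneg hnn]
      exact hb
  -- entrywise bound on g
  have hCb : ∀ x i j, ‖g x i j‖ ≤ max Cb 0 := by
    intro x i j
    refine le_trans (entry_bound (hherm x) (fun v => ?_) (hbdd x) i j) (le_max_left _ _)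
    exact le_trans (mul_nonneg hc.le (Finset.sum_nonneg fun i _ => by positivity)) (hpos x v)
  -- integrability of sesquilinear terms
  have hprod : ∀ (a b : X → Fin m → ℂ), (∀ i, AEStronglyMeasurable (fun x => a x i) μ) →
      (∀ i, AEStronglyMeasurable (fun x => b x i) μ) →
      Integrable (fun x => ∑ i, ‖a x i‖ ^ 2) μ → Integrable (fun x => ∑ i, ‖b x i‖ ^ 2) μ →
      ∀ i j, Integrable (fun x => star (a x i) * (g x i j * b x j)) μ := by
    intro a b ha hb hA2 hB2 i j
    apply Integrable.mono' (((hA2.add hB2).const_mul (max Cb 0 / 2)))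
    · exact ((continuous_star.comp_aestronglyMeasurable (ha i)).mul
        (((hintg i j).1).mul (hb j)))
    · filter_upwards with x
      have h1 : ‖g x i j‖ ≤ max Cb 0 := hCb x i j
      have h2 : ‖a x i‖ ^ 2 ≤ ∑ k, ‖a x k‖ ^ 2 :=
        Finset.single_le_sum (f := fun k => ‖a x k‖ ^ 2) (fun k _ => by positivity)
          (Finset.mem_univ i)
      have h3 : ‖b x j‖ ^ 2 ≤ ∑ k, ‖b x k‖ ^ 2 :=
        Finset.single_le_sum (f := fun k => ‖b x k‖ ^ 2) (fun k _ => by positivity)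
          (Finset.mem_univ j)
      have h4 : ‖star (a x i) * (g x i j * b x j)‖ = ‖a x i‖ * (‖g x i j‖ * ‖b x j‖) := by
        simp [norm_mul]
      rw [h4]
      have h5 : (0:ℝ) ≤ max Cb 0 := le_max_right _ _
      simp only [Pi.add_apply]
      have t2 : (‖a x i‖ * ‖b x j‖) * ‖g x i j‖ ≤ (‖a x i‖ * ‖b x j‖) * (max Cb 0) :=
        mul_le_mul_of_nonneg_left h1 (mul_nonneg (norm_nonneg _) (norm_nonneg _))
      have t3 : ‖a x i‖ * ‖b x j‖ ≤ ((∑ k, ‖a x k‖ ^ 2) + ∑ k, ‖b x k‖ ^ 2) / 2 := by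
        nlinarith [sq_nonneg (‖a x i‖ - ‖b x j‖)]
      have t4 : (‖a x i‖ * ‖b x j‖) * (max Cb 0) ≤
          (((∑ k, ‖a x k‖ ^ 2) + ∑ k, ‖b x k‖ ^ 2) / 2) * (max Cb 0) :=
        mul_le_mul_of_nonneg_right t3 h5
      calc ‖a x i‖ * (‖g x i j‖ * ‖b x j‖) = (‖a x i‖ * ‖b x j‖) * ‖g x i j‖ := by ring
        _ ≤ (‖a x i‖ * ‖b x j‖) * (max Cb 0) := t2
        _ ≤ (((∑ k, ‖a x k‖ ^ 2) + ∑ k, ‖b x k‖ ^ 2) / 2) * (max Cb 0) := t4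
        _ = max Cb 0 / 2 * ((∑ k, ‖a x k‖ ^ 2) + ∑ k, ‖b x k‖ ^ 2) := by ring
  have hform_int : ∀ (a b : X → Fin m → ℂ),
      (∀ i j, Integrable (fun x => star (a x i) * (g x i j * b x j)) μ) →
      Integrable (fun x => star (a x) ⬝ᵥ (g x).mulVec (b x)) μ := by
    intro a b h
    have h1 : (fun x => star (a x) ⬝ᵥ (g x).mulVec (b x)) =
        fun x => ∑ i, ∑ j, star (a x i) * (g x i j * b x j) := by
      funext x; exact expand (g x) (a x) (b x)
    rw [h1]
    exact integrable_finset_sum _ fun i _ => integrable_finset_sum _ fun j _ => h i j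
  have hwm : ∀ i, AEStronglyMeasurable (fun x => w C x i) μ := fun i => (hwint i).1
  have hvm : ∀ i, AEStronglyMeasurable (fun x => vv x i) μ := fun i => (hvint i).1
  have hCm : ∀ i, AEStronglyMeasurable (fun x => (fun _ : X => C) x i) μ := fun i =>
    aestronglyMeasurable_const
  have hCL2 : Integrable (fun x => ∑ i, ‖(fun _ : X => C) x i‖ ^ 2) μ := integrable_const _
  -- nonnegativity of A.re
  have hQre : ∀ x, 0 ≤ (Q x).re := fun x =>
    le_trans (mul_nonneg hc.le (Finset.sum_nonneg fun i _ => by positivity)) (hpos x (vv x))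
  have hAre : 0 ≤ A.re := by
    have h2 : (∫ x, (Q x).re ∂μ) = A.re := integral_re (hintQ C)
    rw [← h2]
    exact integral_nonneg fun x => hQre x
  constructor
  · -- Reuss lower bound
    set G : Matrix (Fin m) (Fin m) ℂ :=
      Matrix.of fun i j => ((T : ℂ))⁻¹ * ∫ x, (g x)⁻¹ i j ∂μ with hG
    by_cases hGu : IsUnit G.det
    · set η : Fin m → ℂ := G⁻¹.mulVec C with hη
      have hdet : ∀ x, IsUnit (g x).det := fun x => isUnit_det hc (hpos x)
      have hpt2 : ∀ x, star (vv x - ((g x)⁻¹).mulVec η) ⬝ᵥ (g x).mulVec (vv x - ((g x)⁻¹).mulVec η) =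
          Q x - (star η ⬝ᵥ vv x) - star (star η ⬝ᵥ vv x)
            + (star η ⬝ᵥ ((g x)⁻¹).mulVec η) := by
        intro x
        rw [sub_form]
        rw [inv_form (hherm x) (hdet x) η (vv x)]
        rw [swap (hherm x) (((g x)⁻¹).mulVec η) (vv x)]
        rw [inv_form (hherm x) (hdet x) η (vv x)]
        rw [inv_form (hherm x) (hdet x) η (((g x)⁻¹).mulVec η)]
      have hηv_int : Integrable (fun x => star η ⬝ᵥ vv x) μ := by
        have h1 : (fun x => star η ⬝ᵥ vv x) = fun x => ∑ k, star (η k) * vv x k := by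
          funext x; simp [dotProduct]
        rw [h1]
        exact integrable_finset_sum _ fun k _ => (hvint k).const_mul _
      have hηg_int : Integrable (fun x => star η ⬝ᵥ ((g x)⁻¹).mulVec η) μ := by
        have h1 : (fun x => star η ⬝ᵥ ((g x)⁻¹).mulVec η) =
            fun x => ∑ i, ∑ j, star (η i) * ((g x)⁻¹ i j * η j) := by
          funext x; exact expand _ _ _
        rw [h1]
        exact integrable_finset_sum _ fun i _ => integrable_finset_sum _ fun j _ =>
          ((hintginv i j).mul_const (η j)).const_mul (star (η i))
      have hd_int : Integrable
          (fun x => star (vv x - ((g x)⁻¹).mulVec η) ⬝ᵥ (g x).mulVec (vv x - ((g x)⁻¹).mulVec η)) μ := by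
        have h1 : (fun x => star (vv x - ((g x)⁻¹).mulVec η) ⬝ᵥ (g x).mulVec (vv x - ((g x)⁻¹).mulVec η)) =
            fun x => Q x - (star η ⬝ᵥ vv x) - star (star η ⬝ᵥ vv x)
              + (star η ⬝ᵥ ((g x)⁻¹).mulVec η) := funext hpt2
        rw [h1]
        have i0 : Integrable Q μ := hintQ C
        exact ((i0.sub hηv_int).sub (integrable_star hηv_int)).add hηg_int
      have hintvvk : ∀ k, ∫ x, vv x k ∂μ = (T : ℂ) * C k := by
        intro k
        have h1 : (fun x => vv x k) = fun x => w C x k + C k := rfl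
        rw [h1, integral_add (hwint k) (integrable_const (C k)), hBmean _ (hwB C) k, zero_add,
          integral_const, measureReal_def, ← hT, Complex.real_smul]
      have hIηv : ∫ x, star η ⬝ᵥ vv x ∂μ = (T : ℂ) * (star η ⬝ᵥ C) := by
        have h1 : (fun x => star η ⬝ᵥ vv x) = fun x => ∑ k, star (η k) * vv x k := by
          funext x; simp [dotProduct]
        rw [h1, integral_finset_sum _ fun k _ => (hvint k).const_mul _]
        have h2 : ∀ k, ∫ x, star (η k) * vv x k ∂μ = star (η k) * ((T : ℂ) * C k) := by
          intro k; rw [integral_const_mul, hintvvk k]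
        rw [Finset.sum_congr rfl fun k _ => h2 k]
        simp only [dotProduct, Pi.star_apply, Finset.mul_sum]
        exact Finset.sum_congr rfl fun k _ => by ring
      have hGij : ∀ i j, ∫ x, (g x)⁻¹ i j ∂μ = (T : ℂ) * G i j := by
        intro i j
        rw [hG]
        simp only [Matrix.of_apply]
        rw [← mul_assoc, mul_inv_cancel₀ hT0, one_mul]
      have hIηg : ∫ x, star η ⬝ᵥ ((g x)⁻¹).mulVec η ∂μ = (T : ℂ) * (star η ⬝ᵥ C) := by
        have h1 : (fun x => star η ⬝ᵥ ((g x)⁻¹).mulVec η) =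
            fun x => ∑ i, ∑ j, star (η i) * ((g x)⁻¹ i j * η j) := by
          funext x; exact expand _ _ _
        rw [h1, integral_finset_sum _ fun i _ => integrable_finset_sum _ fun j _ =>
          ((hintginv i j).mul_const (η j)).const_mul (star (η i))]
        have h2 : ∀ i, ∫ x, ∑ j, star (η i) * ((g x)⁻¹ i j * η j) ∂μ =
            ∑ j, star (η i) * (((T : ℂ) * G i j) * η j) := by
          intro i
          rw [integral_finset_sum _ fun j _ =>
            ((hintginv i j).mul_const (η j)).const_mul (star (η i))]
          refine Finset.sum_congr rfl fun j _ => ?_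
          rw [integral_const_mul, integral_mul_const, hGij i j]
        rw [Finset.sum_congr rfl fun i _ => h2 i]
        have h3 : G.mulVec η = C := by
          rw [hη, mulVec_mulVec, Matrix.mul_nonsing_inv G hGu, one_mulVec]
        calc ∑ i, ∑ j, star (η i) * (((T : ℂ) * G i j) * η j)
            = (T : ℂ) * ∑ i, ∑ j, star (η i) * (G i j * η j) := by
              rw [Finset.mul_sum]
              exact Finset.sum_congr rfl fun i _ => by
                rw [Finset.mul_sum]; exact Finset.sum_congr rfl fun j _ => by ring
          _ = (T : ℂ) * (star η ⬝ᵥ G.mulVec η) := by rw [← expand]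
          _ = (T : ℂ) * (star η ⬝ᵥ C) := by rw [h3]
      have hId : ∫ x, star (vv x - ((g x)⁻¹).mulVec η) ⬝ᵥ (g x).mulVec (vv x - ((g x)⁻¹).mulVec η) ∂μ =
          A - star ((T : ℂ) * (star η ⬝ᵥ C)) := by
        have h1 : (fun x => star (vv x - ((g x)⁻¹).mulVec η) ⬝ᵥ (g x).mulVec (vv x - ((g x)⁻¹).mulVec η)) =
            fun x => Q x - (star η ⬝ᵥ vv x) - star (star η ⬝ᵥ vv x)
              + (star η ⬝ᵥ ((g x)⁻¹).mulVec η) := funext hpt2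
        have i0 : Integrable Q μ := hintQ C
        have i1 : Integrable (fun x => Q x - (star η ⬝ᵥ vv x)) μ := i0.sub hηv_int
        have i2 : Integrable
            (fun x => Q x - (star η ⬝ᵥ vv x) - star (star η ⬝ᵥ vv x)) μ :=
          i1.sub (integrable_star hηv_int)
        rw [h1, integral_add i2 hηg_int, integral_sub i1 (integrable_star hηv_int),
          integral_sub i0 hηv_int]
        have h2 : ∫ x, star (star η ⬝ᵥ vv x) ∂μ = star ((T : ℂ) * (star η ⬝ᵥ C)) := by
          rw [show (∫ x, star (star η ⬝ᵥ vv x) ∂μ)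
              = star (∫ x, star η ⬝ᵥ vv x ∂μ) from integral_conj, hIηv]
        rw [h2, hIηv, hIηg, ← hA]
        ring
      have hdre : 0 ≤ A.re - T * (star η ⬝ᵥ C).re := by
        have h1 : 0 ≤ (∫ x, star (vv x - ((g x)⁻¹).mulVec η) ⬝ᵥ (g x).mulVec (vv x - ((g x)⁻¹).mulVec η) ∂μ).re := by
          have h2' : (∫ x, (star (vv x - ((g x)⁻¹).mulVec η) ⬝ᵥ (g x).mulVec (vv x - ((g x)⁻¹).mulVec η)).re ∂μ)
              = (∫ x, star (vv x - ((g x)⁻¹).mulVec η) ⬝ᵥ (g x).mulVec (vv x - ((g x)⁻¹).mulVec η) ∂μ).re :=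
            integral_re hd_int
          rw [← h2']
          refine integral_nonneg fun x => ?_
          exact le_trans (mul_nonneg hc.le (Finset.sum_nonneg fun i _ => by positivity))
            (hpos x (vv x - ((g x)⁻¹).mulVec η))
        rw [hId] at h1
        have h2 : (star ((T : ℂ) * (star η ⬝ᵥ C))).re = T * (star η ⬝ᵥ C).re := by
          rw [show (star ((T : ℂ) * (star η ⬝ᵥ C))).re = ((T : ℂ) * (star η ⬝ᵥ C)).re from
            Complex.conj_re _, Complex.re_ofReal_mul]
        simp only [Complex.sub_re] at h1
        rw [h2] at h1
        linarith
      have hqre : (star C ⬝ᵥ G⁻¹.mulVec C).re = (star η ⬝ᵥ C).re := by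
        rw [hη, dp_star (G⁻¹.mulVec C) C]
        exact (Complex.conj_re _).symm
      rw [hqre]
      have h3 : T⁻¹ * (T * (star η ⬝ᵥ C).re) ≤ T⁻¹ * A.re :=
        mul_le_mul_of_nonneg_left (by linarith) (inv_nonneg.2 hμT.le)
      rwa [← mul_assoc, inv_mul_cancel₀ (ne_of_gt hμT), one_mul] at h3
    · rw [Matrix.nonsing_inv_apply_not_isUnit _ hGu]
      simp only [Matrix.zero_mulVec, dotProduct_zero, Complex.zero_re]
      exact mul_nonneg (inv_nonneg.2 hμT.le) hAre
  · -- Voigt upper bound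
    have hXint : Integrable (fun x => star (w C x) ⬝ᵥ (g x).mulVec (vv x)) μ :=
      hform_int _ _ (hprod (w C) vv hwm hvm hwL2 hvL2)
    have hWint : Integrable (fun x => star (w C x) ⬝ᵥ (g x).mulVec (w C x)) μ :=
      hform_int _ _ (hprod (w C) (w C) hwm hwm hwL2 hwL2)
    have hCCint : Integrable (fun x => star C ⬝ᵥ (g x).mulVec C) μ :=
      hform_int (fun _ => C) (fun _ => C) (hprod _ _ hCm hCm hCL2 hCL2)
    have hpt : ∀ x, star C ⬝ᵥ (g x).mulVec C =
        Q x - (star (w C x) ⬝ᵥ (g x).mulVec (vv x))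
          - star (star (w C x) ⬝ᵥ (g x).mulVec (vv x))
          + star (w C x) ⬝ᵥ (g x).mulVec (w C x) := by
      intro x
      have hCeq : C = vv x - w C x := by funext k; simp [hvv]
      calc star C ⬝ᵥ (g x).mulVec C
          = star (vv x - w C x) ⬝ᵥ (g x).mulVec (vv x - w C x) := by rw [← hCeq]
        _ = _ := by
            rw [sub_form]
            rw [swap (hherm x) (w C x) (vv x)]
    have hIX : ∫ x, star (w C x) ⬝ᵥ (g x).mulVec (vv x) ∂μ = 0 := hcell C (w C) (hwB C)
    have hICC : ∫ x, star C ⬝ᵥ (g x).mulVec C ∂μ =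
        A + ∫ x, star (w C x) ⬝ᵥ (g x).mulVec (w C x) ∂μ := by
      have h1 : (fun x => star C ⬝ᵥ (g x).mulVec C) =
          fun x => Q x - (star (w C x) ⬝ᵥ (g x).mulVec (vv x))
            - star (star (w C x) ⬝ᵥ (g x).mulVec (vv x))
            + star (w C x) ⬝ᵥ (g x).mulVec (w C x) := funext hpt
      have i0 : Integrable Q μ := hintQ C
      have i1 : Integrable (fun x => Q x - (star (w C x) ⬝ᵥ (g x).mulVec (vv x))) μ :=
        i0.sub hXint
      have i2 : Integrable (fun x => Q x - (star (w C x) ⬝ᵥ (g x).mulVec (vv x))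
          - star (star (w C x) ⬝ᵥ (g x).mulVec (vv x))) μ := i1.sub (integrable_star hXint)
      rw [h1, integral_add i2 hWint, integral_sub i1 (integrable_star hXint),
        integral_sub i0 hXint]
      have h2 : ∫ x, star (star (w C x) ⬝ᵥ (g x).mulVec (vv x)) ∂μ = 0 := by
        rw [show (∫ x, star (star (w C x) ⬝ᵥ (g x).mulVec (vv x)) ∂μ)
            = star (∫ x, star (w C x) ⬝ᵥ (g x).mulVec (vv x) ∂μ) from integral_conj, hIX]
        simp
      rw [h2, hIX, ← hA]
      ring
    have hIW : 0 ≤ (∫ x, star (w C x) ⬝ᵥ (g x).mulVec (w C x) ∂μ).re := by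
      have h2' : (∫ x, (star (w C x) ⬝ᵥ (g x).mulVec (w C x)).re ∂μ)
          = (∫ x, star (w C x) ⬝ᵥ (g x).mulVec (w C x) ∂μ).re := integral_re hWint
      rw [← h2']
      refine integral_nonneg fun x => ?_
      exact le_trans (mul_nonneg hc.le (Finset.sum_nonneg fun i _ => by positivity))
        (hpos x (w C x))
    have hGbar : (star C ⬝ᵥ (Matrix.of fun i j => ((T : ℂ))⁻¹ * ∫ x, g x i j ∂μ).mulVec C) =
        (T : ℂ)⁻¹ * ∫ x, star C ⬝ᵥ (g x).mulVec C ∂μ := by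
      have h1 : (fun x => star C ⬝ᵥ (g x).mulVec C) =
          fun x => ∑ i, ∑ j, star (C i) * (g x i j * C j) := by
        funext x; exact expand _ _ _
      rw [h1, integral_finset_sum _ fun i _ => integrable_finset_sum _ fun j _ =>
        ((hintg i j).mul_const (C j)).const_mul (star (C i))]
      rw [expand]
      rw [Finset.mul_sum]
      refine Finset.sum_congr rfl fun i _ => ?_
      rw [integral_finset_sum _ fun j _ =>
        ((hintg i j).mul_const (C j)).const_mul (star (C i)), Finset.mul_sum]
      refine Finset.sum_congr rfl fun j _ => ?_
      rw [integral_const_mul, integral_mul_const]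
      simp only [Matrix.of_apply]
      ring
    rw [hGbar, hICC]
    have h4 : ((T : ℂ)⁻¹ * (A + ∫ x, star (w C x) ⬝ᵥ (g x).mulVec (w C x) ∂μ)).re =
        T⁻¹ * (A + ∫ x, star (w C x) ⬝ᵥ (g x).mulVec (w C x) ∂μ).re := by
      rw [show ((T : ℂ))⁻¹ = ((T⁻¹ : ℝ) : ℂ) from by push_cast; ring, Complex.re_ofReal_mul]
    rw [h4, Complex.add_re]
    have h5 : T⁻¹ * A.re ≤ T⁻¹ * (A.re + (∫ x, star (w C x) ⬝ᵥ (g x).mulVec (w C x) ∂μ).re) :=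
      mul_le_mul_of_nonneg_left (by linarith) (inv_nonneg.2 hμT.le)
    exact h5
end

section
/- For every φ ∈ (0, 2π), every ζ = |ζ|e^{iφ} with |ζ| > 0, and every x ≥ 0: (x + |ζ|ε^{2p}) · |x − ζε^{2p}|^{-1} ≤ 2 c(φ), where ε > 0 and c(φ) = |sin φ|^{-1} for φ ∈ (0, π/2) ∪ (3π/2, 2π), c(φ) = 1 otherwise. -/
/-- The constant `c(φ)` from (7.22). -/
noncomputable def cOf (φ : ℝ) : ℝ :=
  if φ ∈ Set.Ioo 0 (Real.pi / 2) ∪ Set.Ioo (3 * Real.pi / 2) (2 * Real.pi) then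
    |Real.sin φ|⁻¹
  else 1

/-- Scalar inequality (7.54): for `φ ∈ (0,2π)`, `ζ = |ζ|e^{iφ}` with `|ζ| > 0`, `ε > 0`
and `x ≥ 0`, `(x + |ζ|ε^{2p}) |x − ζε^{2p}|⁻¹ ≤ 2c(φ)`. -/
theorem stmt_19 (φ : ℝ) (hφ : φ ∈ Set.Ioo 0 (2 * Real.pi)) (r : ℝ) (hr : 0 < r)
    (ε : ℝ) (hε : 0 < ε) (p : ℕ) (hp : 1 ≤ p) (x : ℝ) (hx : 0 ≤ x) :
    (x + r * ε ^ (2 * p)) *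
        ‖(x : ℂ) - ((r * ε ^ (2 * p) : ℝ) : ℂ) * Complex.exp (φ * Complex.I)‖⁻¹ ≤
      2 * cOf φ := by
  obtain ⟨hφ0, hφ2⟩ := hφ
  have hπ := Real.pi_pos
  set s : ℝ := r * ε ^ (2 * p) with hsdef
  have hs : 0 < s := by positivity
  set N : ℝ := ‖(x : ℂ) - ((s : ℝ) : ℂ) * Complex.exp (φ * Complex.I)‖ with hNdef
  have hN0 : 0 ≤ N := norm_nonneg _
  have hN2 : N ^ 2 = (x - s * Real.cos φ) ^ 2 + (s * Real.sin φ) ^ 2 := by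
    rw [hNdef, Complex.sq_norm, Complex.normSq_apply]
    simp [Complex.exp_mul_I, Complex.cos_ofReal_re, Complex.sin_ofReal_re]
    ring
  have hpyth := Real.sin_sq_add_cos_sq φ
  have hcos1 : Real.cos φ < 1 := by
    have hne : Real.cos φ ≠ 1 := by
      intro hc
      rw [Real.cos_eq_one_iff_of_lt_of_lt (by linarith) hφ2] at hc
      linarith
    exact lt_of_le_of_ne (Real.cos_le_one φ) hne
  clear_value N
  have hN2' : N ^ 2 = x ^ 2 + s ^ 2 - 2 * x * s * Real.cos φ := by
    rw [hN2]; linear_combination s ^ 2 * hpyth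
  clear_value s
  clear hNdef hsdef
  have hNpos : 0 < N := by
    have h2 : 0 < N ^ 2 := by
      rw [hN2']
      rcases hx.eq_or_lt with h | h
      · rw [← h]; nlinarith [mul_pos hs hs]
      · nlinarith [sq_nonneg (x - s), mul_pos (mul_pos h hs) (sub_pos.mpr hcos1)]
    nlinarith [h2, hN0]
  have hc0 : 0 ≤ cOf φ := by
    unfold cOf; split_ifs <;> positivity
  rw [← div_eq_mul_inv, div_le_iff₀ hNpos]
  have hsq : (x + s) ^ 2 ≤ (2 * cOf φ * N) ^ 2 := by
    unfold cOf
    split_ifs with h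
    · have hcs : 0 < Real.cos φ ∧ Real.sin φ ≠ 0 := by
        rcases h with h | h
        · exact ⟨Real.cos_pos_of_mem_Ioo ⟨by linarith [h.1], h.2⟩,
            ne_of_gt (Real.sin_pos_of_pos_of_lt_pi h.1 (by linarith [h.2]))⟩
        · constructor
          · rw [← Real.cos_sub_two_pi]
            exact Real.cos_pos_of_mem_Ioo ⟨by linarith [h.1], by linarith [h.2]⟩
          · rw [← Real.sin_sub_two_pi]
            exact ne_of_lt (Real.sin_neg_of_neg_of_neg_pi_lt (by linarith [h.2])
              (by linarith [h.1]))
      obtain ⟨hcos, hsne⟩ := hcs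
      have hsin2 : 0 < (Real.sin φ) ^ 2 := by positivity
      have key : (Real.sin φ) ^ 2 * (x + s) ^ 2 ≤ 4 * N ^ 2 := by
        have expand : 4 * N ^ 2 - (Real.sin φ) ^ 2 * (x + s) ^ 2 =
            (3 + Real.cos φ ^ 2) * (x - s) ^ 2 +
              4 * (1 - Real.cos φ) ^ 2 * (x * s) := by
          rw [hN2]
          linear_combination (4 * s ^ 2 - (x + s) ^ 2) * hpyth
        nlinarith [expand, mul_nonneg (mul_nonneg hx hs.le) (sq_nonneg (1 - Real.cos φ)),
          mul_nonneg (by positivity : (0:ℝ) ≤ 3 + Real.cos φ ^ 2) (sq_nonneg (x - s))]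
      calc (x + s) ^ 2 ≤ 4 * N ^ 2 / (Real.sin φ) ^ 2 :=
            (le_div_iff₀ hsin2).mpr (by nlinarith [key])
        _ = (2 * |Real.sin φ|⁻¹ * N) ^ 2 := by
            field_simp [sq_abs]
            rw [sq_abs]
            ring
    · have h1 : Real.pi / 2 ≤ φ := by
        by_contra hc; push_neg at hc; exact h (Or.inl ⟨hφ0, hc⟩)
      have h2 : φ ≤ Real.pi + Real.pi / 2 := by
        by_contra hc; push_neg at hc; exact h (Or.inr ⟨by linarith, hφ2⟩)
      have hcos : Real.cos φ ≤ 0 := Real.cos_nonpos_of_pi_div_two_le_of_le h1 h2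
      have h4 : (2 * 1 * N) ^ 2 = 4 * N ^ 2 := by ring
      rw [h4, hN2']
      nlinarith [sq_nonneg (x - s),
        mul_nonneg (mul_nonneg hx hs.le) (neg_nonneg.mpr hcos)]
  calc x + s = Real.sqrt ((x + s) ^ 2) := (Real.sqrt_sq (by linarith)).symm
    _ ≤ Real.sqrt ((2 * cOf φ * N) ^ 2) := Real.sqrt_le_sqrt hsq
    _ = 2 * cOf φ * N :=
        Real.sqrt_sq (mul_nonneg (mul_nonneg (by norm_num) hc0) hN0)
end
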